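/- Second-Order Soundness and Completeness: for a second-order equational presentation ℰ = (Σ, E), an equation Θ ▹ Γ ⊢ s ≡ t is derivable from E in Second-Order Equational Logic if and only if every ℰ-model A in Set^𝔽 satisfies it, i.e. the interpretations ⟦Θ ▹ Γ ⊢ s⟧_A and ⟦Θ ▹ Γ ⊢ t⟧_A are equal morphisms ⟦Θ ▹ Γ⟧_A → A in Set^𝔽. -/

import Mathlib

/-! ## Second-order syntax (de Bruijn representation)

An arity/sequence `(m₁,…,m_k) ∈ ℕ*` is a `Ctxa`.  A second-order signature is a set of
operators with such arities.  Terms in a metavariable context (given by a type `M` of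
metavariables with meta-arities `mar : M → ℕ`) and a variable context of size `n` are
generated by variables, metavariables applied to their parameters, and operators binding
variables in their arguments.  Working with de Bruijn indices gives terms up to
α-equivalence. -/

/-- A finite sequence `(m₁,…,m_k)` of natural numbers (an element of ℕ*). -/
structure Ctxa where
  len : ℕ
  ar : Fin len → ℕ

/-- A second-order signature: a set of operators with arities `(n₁,…,n_k) ∈ ℕ*`;
an operator of arity `(n₁,…,n_k)` takes `k` arguments and binds `nᵢ` variables in the
`i`-th argument. -/
structure SOSig : Type 1 where
  Op : Type
  arity : Op → Ctxa

namespace SO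

/-- Second-order terms over the signature `S`, in metavariable context `(M, mar)` and
variable context of size `n` (variables are de Bruijn indices `Fin n`, so terms are
automatically identified up to α-equivalence). -/
inductive Term (S : SOSig) (M : Type) (mar : M → ℕ) : ℕ → Type
  | var {n : ℕ} : Fin n → Term S M mar n
  | mvar {n : ℕ} (m : M) (ts : Fin (mar m) → Term S M mar n) : Term S M mar n
  | op {n : ℕ} (o : S.Op)
      (ts : ∀ i : Fin (S.arity o).len, Term S M mar (n + (S.arity o).ar i)) :
      Term S M mar n

namespace Term

variable {S : SOSig} {M M' : Type} {mar : M → ℕ} {mar' : M' → ℕ}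

/-- Cast a term along an equality of variable-context sizes. -/
def castCtx {n n' : ℕ} (h : n = n') (t : Term S M mar n) : Term S M mar n' := h ▸ t

/-- Extend a renaming to a context enlarged by `p` bound variables. -/
def extRen {n n' : ℕ} (ρ : Fin n → Fin n') (p : ℕ) : Fin (n + p) → Fin (n' + p) :=
  Fin.addCases (fun j => Fin.castAdd p (ρ j)) (fun j => Fin.natAdd n' j)

/-- Renaming of variables. -/
def rename : ∀ {n n' : ℕ}, Term S M mar n → (Fin n → Fin n') → Term S M mar n'
  | _, _, .var x, ρ => .var (ρ x)
  | _, _, .mvar m ts, ρ => .mvar m (fun j => rename (ts j) ρ)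
  | _, _, .op o ts, ρ => .op o (fun i => rename (ts i) (extRen ρ _))

/-- Weakening of a term by `p` fresh variables (added at the end of the context). -/
def weaken {n : ℕ} (p : ℕ) (t : Term S M mar n) : Term S M mar (n + p) :=
  rename t (Fin.castAdd p)

/-- Extend a simultaneous substitution to a context enlarged by `p` bound variables
(the bound variables are mapped to themselves). -/
def extSub {n n' : ℕ} (σ : Fin n → Term S M mar n') (p : ℕ) :
    Fin (n + p) → Term S M mar (n' + p) :=
  Fin.addCases (fun j => weaken p (σ j)) (fun j => .var (Fin.natAdd n' j))

/-- Capture-avoiding simultaneous substitution `t{xᵢ := σ(i)}` of terms for variables. -/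
def subst : ∀ {n n' : ℕ}, Term S M mar n → (Fin n → Term S M mar n') → Term S M mar n'
  | _, _, .var x, σ => σ x
  | _, _, .mvar m ts, σ => .mvar m (fun j => subst (ts j) σ)
  | _, _, .op o ts, σ => .op o (fun i => subst (ts i) (extSub σ _))

/-- The renaming inserting `p` fresh variables in the middle of a context `n' + a`
(between the first `n'` variables and the last `a` bound ones). -/
def midWeak (n' p a : ℕ) : Fin (n' + a) → Fin (n' + p + a) :=
  Fin.addCases (fun j => Fin.castAdd a (Fin.castAdd p j)) (fun j => Fin.natAdd (n' + p) j)

/-- Metasubstitution `t{𝕞 := (x⃗_𝕞)s(𝕞)}` (simultaneously renaming the variables of `t`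
along `ρ`): each metavariable `𝕞` of meta-arity `mar 𝕞` is replaced by the term
`s 𝕞`, which lives in the target context extended by `mar 𝕞` abstracted variables;
the parameters of `𝕞` are substituted for those abstracted variables. -/
def msubst : ∀ {n n' : ℕ}, Term S M mar n → (Fin n → Fin n') →
    (∀ m : M, Term S M' mar' (n' + mar m)) → Term S M' mar' n'
  | _, _, .var x, ρ, _ => .var (ρ x)
  | _, _, .mvar m ts, ρ, s =>
      subst (s m) (Fin.addCases (fun j => .var j) (fun j => msubst (ts j) ρ s))
  | _, _, .op o ts, ρ, s =>
      .op o (fun i => msubst (ts i) (extRen ρ _) (fun m => rename (s m) (midWeak _ _ _)))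

end Term

end SO
namespace SO

/-- A second-order equation `Θ ▹ Γ ⊢ lhs ≡ rhs` in a metavariable context
`𝕞₁:[m₁],…,𝕞_k:[m_k]` (given by `mlen` and `mar`) and a variable context of size
`ctx`. -/
structure SOEqn (S : SOSig) where
  mlen : ℕ
  mar : Fin mlen → ℕ
  ctx : ℕ
  lhs : Term S (Fin mlen) mar ctx
  rhs : Term S (Fin mlen) mar ctx

/-- The renaming regarding a context `Δ,x⃗` (of size `d + a`) inside `Γ,Δ,x⃗`
(of size `(n + d) + a`). -/
def sideWeak (n d a : ℕ) : Fin (d + a) → Fin (n + d + a) :=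
  Fin.addCases (fun j => Fin.castAdd a (Fin.natAdd n j)) (fun j => Fin.natAdd (n + d) j)

/-- **Second-Order Equational Logic**: derivability of an equation
`Θ ▹ Γ ⊢ s ≡ t` from a set `E` of axioms, by the rules: (Axioms) every axiom is
derivable; (Equivalence) reflexivity, symmetry, transitivity; (Extended
metasubstitution) from `𝕞₁:[m₁],…,𝕞_k:[m_k] ▹ Γ ⊢ s ≡ t` (with `Γ` of size `n`) and
`Θ ▹ Δ, x⃗ᵢ ⊢ σᵢ ≡ τᵢ` (`1 ≤ i ≤ k`, `Δ` of size `d`) derive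
`Θ ▹ Γ, Δ ⊢ s{𝕞ᵢ := (x⃗ᵢ)σᵢ} ≡ t{𝕞ᵢ := (x⃗ᵢ)τᵢ}`. -/
inductive SODeriv (S : SOSig) (E : Set (SOEqn S)) :
    ∀ (k : ℕ) (mar : Fin k → ℕ) (n : ℕ),
      Term S (Fin k) mar n → Term S (Fin k) mar n → Prop
  | ax {e : SOEqn S} (he : e ∈ E) : SODeriv S E e.mlen e.mar e.ctx e.lhs e.rhs
  | refl {k : ℕ} {mar : Fin k → ℕ} {n : ℕ} (t : Term S (Fin k) mar n) :
      SODeriv S E k mar n t t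
  | symm {k : ℕ} {mar : Fin k → ℕ} {n : ℕ} {s t : Term S (Fin k) mar n} :
      SODeriv S E k mar n s t → SODeriv S E k mar n t s
  | trans {k : ℕ} {mar : Fin k → ℕ} {n : ℕ} {s t u : Term S (Fin k) mar n} :
      SODeriv S E k mar n s t → SODeriv S E k mar n t u → SODeriv S E k mar n s u
  | msub {k : ℕ} {mar : Fin k → ℕ} {n : ℕ} {s t : Term S (Fin k) mar n}
      {k' : ℕ} {mar' : Fin k' → ℕ} {d : ℕ}
      {σ τ : ∀ i : Fin k, Term S (Fin k') mar' (d + mar i)} :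
      SODeriv S E k mar n s t →
      (∀ i, SODeriv S E k' mar' (d + mar i) (σ i) (τ i)) →
      SODeriv S E k' mar' (n + d)
        (Term.msubst s (Fin.castAdd d)
          (fun i => Term.rename (σ i) (sideWeak n d (mar i))))
        (Term.msubst t (Fin.castAdd d)
          (fun i => Term.rename (τ i) (sideWeak n d (mar i))))

end SO
namespace SO

/-- A monoid for the substitution monoidal structure `(Set^𝔽, y1, ⊗)` on the presheaf
category of sets in variable contexts, described elementwise: a presheaf `F` on the
category `𝔽` of finite cardinals (`F`, `map`, functoriality), a point `ν : y1 → F`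
(natural family `ν`), and a multiplication `ς : F ⊗ F → F` for the substitution tensor
`X ⊗ Y = ∫^k X(k) × Y^k`, whose components, by the universal property of the coend,
amount exactly to a family `mult : F k → (Fin k → F n) → F n` that is dinatural in `k`
and natural in `n`, satisfying the monoid unit and associativity laws. -/
structure SubstMonoid : Type 1 where
  F : ℕ → Type
  map : ∀ {m n : ℕ}, (Fin m → Fin n) → F m → F n
  map_id : ∀ {n : ℕ} (x : F n), map id x = x
  map_comp : ∀ {m n p : ℕ} (f : Fin m → Fin n) (g : Fin n → Fin p) (x : F m),
    map (g ∘ f) x = map g (map f x)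
  ν : ∀ {n : ℕ}, Fin n → F n
  ν_nat : ∀ {m n : ℕ} (ρ : Fin m → Fin n) (i : Fin m), map ρ (ν i) = ν (ρ i)
  mult : ∀ {k n : ℕ}, F k → (Fin k → F n) → F n
  mult_dinat : ∀ {k k' n : ℕ} (ρ : Fin k → Fin k') (a : F k) (g : Fin k' → F n),
    mult (map ρ a) g = mult a (fun i => g (ρ i))
  mult_nat : ∀ {k n n' : ℕ} (ρ : Fin n → Fin n') (a : F k) (g : Fin k → F n),
    map ρ (mult a g) = mult a (fun i => map ρ (g i))
  mult_unit_left : ∀ {k n : ℕ} (i : Fin k) (g : Fin k → F n), mult (ν i) g = g i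
  mult_unit_right : ∀ {n : ℕ} (a : F n), mult a ν = a
  mult_assoc : ∀ {k m n : ℕ} (a : F k) (f : Fin k → F m) (g : Fin m → F n),
    mult (mult a f) g = mult a (fun i => mult (f i) g)

/-- Extension of a substitution family by `p` fresh (bound) variables: old values are
weakened and the fresh variables are sent to variables via the unit.  This is the
elementwise form of the canonical pointed strength of the signature endofunctor. -/
def SubstMonoid.extMult (A : SubstMonoid) {n n' : ℕ} (g : Fin n → A.F n') (p : ℕ) :
    Fin (n + p) → A.F (n' + p) :=
  Fin.addCases (fun j => A.map (Fin.castAdd p) (g j)) (fun j => A.ν (Fin.natAdd n' j))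

/-- A model (`Σ`-monoid) for a second-order signature `S` in `Set^𝔽`: a substitution
monoid `A` together with an algebra structure `opMap` for the signature endofunctor
`F_Σ X = ∐_ω ∏ᵢ X^{y nᵢ}` (elementwise, using `X^{y nᵢ}(m) = X(m + nᵢ)`), natural in
the stage, and compatible with the monoid multiplication via the canonical pointed
strength (`opMap_mult`). -/
structure SOModel (S : SOSig) : Type 1 extends SubstMonoid where
  opMap : ∀ (o : S.Op) {n : ℕ},
    (∀ i : Fin (S.arity o).len, F (n + (S.arity o).ar i)) → F n
  opMap_nat : ∀ (o : S.Op) {n n' : ℕ} (ρ : Fin n → Fin n')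
      (ts : ∀ i : Fin (S.arity o).len, F (n + (S.arity o).ar i)),
    map ρ (opMap o ts) = opMap o (fun i => map (Term.extRen ρ _) (ts i))
  opMap_mult : ∀ (o : S.Op) {n n' : ℕ}
      (ts : ∀ i : Fin (S.arity o).len, F (n + (S.arity o).ar i)) (g : Fin n → F n'),
    mult (opMap o ts) g =
      opMap o (fun i => mult (ts i) (SubstMonoid.extMult toSubstMonoid g _))

/-- The interpretation `⟦Θ ▹ Γ ⊢ t⟧_A : ⟦Θ ▹ Γ⟧_A → A` of a second-order term in a
model `A`, where `⟦Θ ▹ Γ⟧_A = ∏ᵢ A^{y mᵢ} × y n`, described at stage `j` (an element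
of `⟦Θ ▹ Γ⟧_A (j)` being a pair of `θ : ∀ i, A (j + mᵢ)` and `γ : Fin n → Fin j`):
variables are interpreted via the unit `ν`, metavariables via the substitution
operation induced by the multiplication, and operators via the algebra structure. -/
def interp {S : SOSig} (A : SOModel S) {k : ℕ} {mar : Fin k → ℕ} :
    ∀ {n j : ℕ}, Term S (Fin k) mar n →
      (∀ i : Fin k, A.F (j + mar i)) → (Fin n → Fin j) → A.F j
  | _, _, .var x, _, γ => A.ν (γ x)
  | _, _, .mvar m ts, θ, γ =>
      A.mult (θ m)
        (Fin.addCases (fun v => A.ν v) (fun v => interp A (ts v) θ γ))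
  | _, _, .op o ts, θ, γ =>
      A.opMap o (fun i =>
        interp A (ts i) (fun m => A.map (Term.midWeak _ _ (mar m)) (θ m))
          (Term.extRen γ _))

/-- A model satisfies an equation when the interpretations of its two sides are equal
morphisms `⟦Θ ▹ Γ⟧_A → A` in `Set^𝔽`. -/
def SOModel.Sat {S : SOSig} (A : SOModel S) (e : SOEqn S) : Prop :=
  ∀ (j : ℕ) (θ : ∀ i : Fin e.mlen, A.F (j + e.mar i)) (γ : Fin e.ctx → Fin j),
    interp A e.lhs θ γ = interp A e.rhs θ γ

end SO

open SO SO.Term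
namespace SO
namespace Term

variable {S : SOSig} {M : Type} {mar : M → ℕ}

/-- Case analysis principle for `Fin (m + p)`. -/
theorem finAddCases {m p : ℕ} {P : Fin (m + p) → Prop}
    (h1 : ∀ x : Fin m, P (Fin.castAdd p x)) (h2 : ∀ x : Fin p, P (Fin.natAdd m x)) :
    ∀ x, P x := fun x => Fin.addCases h1 h2 x

theorem addCases_cast_nat {m p : ℕ} (x : Fin (m + p)) :
    Fin.addCases (Fin.castAdd p) (Fin.natAdd m) x = x := by
  induction x using finAddCases with
  | h1 x => simp
  | h2 x => simp

theorem extRen_castAdd {n n' : ℕ} (ρ : Fin n → Fin n') (p : ℕ) (x : Fin n) :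
    extRen ρ p (Fin.castAdd p x) = Fin.castAdd p (ρ x) := by simp [extRen]

theorem extRen_natAdd {n n' : ℕ} (ρ : Fin n → Fin n') (p : ℕ) (x : Fin p) :
    extRen ρ p (Fin.natAdd n x) = Fin.natAdd n' x := by simp [extRen]

theorem extRen_comp {n n₁ n₂ : ℕ} (f : Fin n → Fin n₁) (g : Fin n₁ → Fin n₂) (p : ℕ)
    (x : Fin (n + p)) : extRen g p (extRen f p x) = extRen (fun y => g (f y)) p x := by
  induction x using finAddCases with
  | h1 x => simp [extRen_castAdd]
  | h2 x => simp [extRen_natAdd]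

theorem extRen_id {n p : ℕ} (x : Fin (n + p)) : extRen (fun y => y) p x = x := by
  induction x using finAddCases with
  | h1 x => simp [extRen_castAdd]
  | h2 x => simp [extRen_natAdd]

theorem midWeak_eq {n' p a : ℕ} (x : Fin (n' + a)) :
    midWeak n' p a x = extRen (Fin.castAdd p) a x := by
  induction x using finAddCases with
  | h1 x => simp [midWeak, extRen_castAdd]
  | h2 x => simp [midWeak, extRen_natAdd]

theorem rename_congr {n n' : ℕ} (t : Term S M mar n) {f g : Fin n → Fin n'}
    (h : ∀ x, f x = g x) : rename t f = rename t g := by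
  have : f = g := funext h
  rw [this]

theorem rename_rename {n : ℕ} (t : Term S M mar n) :
    ∀ {n₁ n₂ : ℕ} (f : Fin n → Fin n₁) (g : Fin n₁ → Fin n₂),
      rename (rename t f) g = rename t (fun x => g (f x)) := by
  induction t with
  | var x => intros; rfl
  | mvar m ts ih => intro n₁ n₂ f g; simp only [rename]; exact congrArg _ (funext fun j => ih j f g)
  | op o ts ih =>
    intro n₁ n₂ f g
    simp only [rename]
    refine congrArg _ (funext fun i => ?_)
    rw [ih i (extRen f _) (extRen g _)]
    exact rename_congr _ (extRen_comp f g _)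

theorem rename_id {n : ℕ} (t : Term S M mar n) : rename t (fun x => x) = t := by
  induction t with
  | var x => rfl
  | mvar m ts ih => simp only [rename]; exact congrArg _ (funext fun j => ih j)
  | op o ts ih =>
    simp only [rename]
    refine congrArg _ (funext fun i => ?_)
    rw [rename_congr _ (extRen_id (p := (S.arity o).ar i)), ih i]

theorem subst_congr {n n' : ℕ} (t : Term S M mar n) {f g : Fin n → Term S M mar n'}
    (h : ∀ x, f x = g x) : subst t f = subst t g := by
  have : f = g := funext h
  rw [this]

theorem extSub_castAdd {n n' : ℕ} (σ : Fin n → Term S M mar n') (p : ℕ) (x : Fin n) :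
    extSub σ p (Fin.castAdd p x) = weaken p (σ x) := by simp [extSub]

theorem extSub_natAdd {n n' : ℕ} (σ : Fin n → Term S M mar n') (p : ℕ) (x : Fin p) :
    extSub σ p (Fin.natAdd n x) = .var (Fin.natAdd n' x) := by simp [extSub]

theorem subst_rename {n : ℕ} (t : Term S M mar n) :
    ∀ {n₁ n₂ : ℕ} (f : Fin n → Fin n₁) (σ : Fin n₁ → Term S M mar n₂),
      subst (rename t f) σ = subst t (fun x => σ (f x)) := by
  induction t with
  | var x => intros; rfl
  | mvar m ts ih => intro n₁ n₂ f σ; simp only [rename, subst]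
                    exact congrArg _ (funext fun j => ih j f σ)
  | op o ts ih =>
    intro n₁ n₂ f σ
    simp only [rename, subst]
    refine congrArg _ (funext fun i => ?_)
    rw [ih i (extRen f _) (extSub σ _)]
    refine subst_congr _ fun x => ?_
    induction x using finAddCases with
    | h1 x => simp [extRen_castAdd, extSub_castAdd]
    | h2 x => simp [extRen_natAdd, extSub_natAdd]

theorem rename_subst {n : ℕ} (t : Term S M mar n) :
    ∀ {n₁ n₂ : ℕ} (σ : Fin n → Term S M mar n₁) (f : Fin n₁ → Fin n₂),
      rename (subst t σ) f = subst t (fun x => rename (σ x) f) := by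
  induction t with
  | var x => intros; rfl
  | mvar m ts ih => intro n₁ n₂ σ f; simp only [rename, subst]
                    exact congrArg _ (funext fun j => ih j σ f)
  | op o ts ih =>
    intro n₁ n₂ σ f
    simp only [rename, subst]
    refine congrArg _ (funext fun i => ?_)
    rw [ih i (extSub σ _) (extRen f _)]
    refine subst_congr _ fun x => ?_
    induction x using finAddCases with
    | h1 x =>
      simp only [extSub_castAdd, weaken]
      rw [rename_rename, rename_rename]
      exact rename_congr _ fun y => extRen_castAdd f _ y
    | h2 x => simp [extSub_natAdd, rename, extRen_natAdd]

theorem subst_of_var {n : ℕ} (t : Term S M mar n) :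
    ∀ {n' : ℕ} (π : Fin n → Fin n'), subst t (fun x => .var (π x)) = rename t π := by
  induction t with
  | var x => intros; rfl
  | mvar m ts ih => intro n' π; simp only [rename, subst]
                    exact congrArg _ (funext fun j => ih j π)
  | op o ts ih =>
    intro n' π
    simp only [rename, subst]
    refine congrArg _ (funext fun i => ?_)
    rw [← ih i (extRen π _)]
    refine subst_congr _ fun x => ?_
    induction x using finAddCases with
    | h1 x => simp [extSub_castAdd, extRen_castAdd, weaken, rename]
    | h2 x => simp [extSub_natAdd, extRen_natAdd]

theorem subst_var {n : ℕ} (t : Term S M mar n) : subst t (fun x => .var x) = t := by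
  rw [subst_of_var t (fun x => x), rename_id]

theorem subst_subst {n : ℕ} (t : Term S M mar n) :
    ∀ {n₁ n₂ : ℕ} (σ : Fin n → Term S M mar n₁) (ρ : Fin n₁ → Term S M mar n₂),
      subst (subst t σ) ρ = subst t (fun x => subst (σ x) ρ) := by
  induction t with
  | var x => intros; rfl
  | mvar m ts ih => intro n₁ n₂ σ ρ; simp only [subst]
                    exact congrArg _ (funext fun j => ih j σ ρ)
  | op o ts ih =>
    intro n₁ n₂ σ ρ
    simp only [subst]
    refine congrArg _ (funext fun i => ?_)
    rw [ih i (extSub σ _) (extSub ρ _)]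
    refine subst_congr _ fun x => ?_
    induction x using finAddCases with
    | h1 x =>
      simp only [extSub_castAdd, weaken]
      rw [subst_rename, rename_subst]
      exact subst_congr _ fun y => extSub_castAdd ρ _ y
    | h2 x => simp [extSub_natAdd, subst]

end Term
end SO
namespace SO
namespace Term

variable {S : SOSig} {M M' : Type} {mar : M → ℕ} {mar' : M' → ℕ}

theorem msubst_congr {k : ℕ} {kmar : Fin k → ℕ} {n n' : ℕ}
    (t : Term S (Fin k) kmar n) (ρ : Fin n → Fin n')
    {sf sg : ∀ m : Fin k, Term S M' mar' (n' + kmar m)} (h : ∀ m, sf m = sg m) :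
    msubst t ρ sf = msubst t ρ sg := by
  have : sf = sg := funext h
  rw [this]

theorem msubst_ρcongr {k : ℕ} {kmar : Fin k → ℕ} {n n' : ℕ}
    (t : Term S (Fin k) kmar n) {ρ ρ' : Fin n → Fin n'}
    (sf : ∀ m : Fin k, Term S M' mar' (n' + kmar m)) (h : ∀ x, ρ x = ρ' x) :
    msubst t ρ sf = msubst t ρ' sf := by
  have : ρ = ρ' := funext h
  rw [this]

/-- Metasubstitution by the generic family is renaming. -/
theorem msubst_generic {k : ℕ} {kmar : Fin k → ℕ} {n : ℕ} (t : Term S (Fin k) kmar n) :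
    ∀ {n' : ℕ} (ρ : Fin n → Fin n'),
      msubst t ρ (fun i => .mvar i (fun v => .var (Fin.natAdd n' v))) = rename t ρ := by
  induction t with
  | var x => intros; rfl
  | mvar m ts ih =>
    intro n' ρ
    simp only [msubst, subst, rename]
    refine congrArg _ (funext fun v => ?_)
    rw [Fin.addCases_right]
    exact ih v ρ
  | op o ts ih =>
    intro n' ρ
    simp only [msubst, rename]
    refine congrArg _ (funext fun i => ?_)
    rw [← ih i (extRen ρ _)]
    refine msubst_congr _ _ fun m => ?_
    exact congrArg _ (funext fun v => by simp [midWeak])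

/-- Renaming after metasubstitution. -/
theorem rename_msubst {k : ℕ} {kmar : Fin k → ℕ} {n : ℕ} (t : Term S (Fin k) kmar n) :
    ∀ {n' n₂ : ℕ} (ρ : Fin n → Fin n') (sf : ∀ m : Fin k, Term S M' mar' (n' + kmar m))
      (π : Fin n' → Fin n₂),
      rename (msubst t ρ sf) π
        = msubst t (fun x => π (ρ x)) (fun m => rename (sf m) (extRen π (kmar m))) := by
  induction t with
  | var x => intros; rfl
  | mvar m ts ih =>
    intro n' n₂ ρ sf π
    simp only [msubst]
    rw [rename_subst, subst_rename]
    refine subst_congr _ fun x => ?_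
    induction x using finAddCases with
    | h1 x => simp [extRen_castAdd, rename]
    | h2 x => simp only [extRen_natAdd]
              rw [Fin.addCases_right, Fin.addCases_right, ih x ρ sf π]
  | op o ts ih =>
    intro n' n₂ ρ sf π
    simp only [msubst, rename]
    refine congrArg _ (funext fun i => ?_)
    rw [ih i (extRen ρ _) _ (extRen π _)]
    rw [msubst_ρcongr _ _ (fun x => extRen_comp ρ π _ x)]
    refine msubst_congr _ _ fun m => ?_
    rw [rename_rename, rename_rename]
    refine rename_congr _ fun x => ?_
    induction x using finAddCases with
    | h1 x => simp [midWeak_eq, extRen_castAdd, extRen_natAdd]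
    | h2 x => simp [midWeak_eq, extRen_castAdd, extRen_natAdd]

end Term
end SO
namespace SO
open Term

variable {S : SOSig} {E : Set (SOEqn S)}

/-- Transport a derivation along an equality of contexts. -/
theorem SODeriv.castCtx_congr {k : ℕ} {mar : Fin k → ℕ} {n n' : ℕ} (h : n = n')
    {u v : Term S (Fin k) mar n} (D : SODeriv S E k mar n u v) :
    SODeriv S E k mar n' (castCtx h u) (castCtx h v) := by
  subst h; exact D

theorem rename_castCtx {M : Type} {mmar : M → ℕ} {n n' j : ℕ} (h : n = n')
    (t : Term S M mmar n) (π : Fin n' → Fin j) :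
    rename (castCtx h t) π = rename t (fun x => π (Fin.cast h x)) := by
  subst h; rfl

/-- The basic renaming trick: from a derivation at context `d + p` and a map of the
last `p` variables, derive the correspondingly renamed equation. -/
theorem SODeriv.trickB {k' : ℕ} {mar' : Fin k' → ℕ} {d p : ℕ}
    {u u' : Term S (Fin k') mar' (d + p)} (D : SODeriv S E k' mar' (d + p) u u')
    {n'' : ℕ} (ρ : Fin p → Fin n'') :
    SODeriv S E k' mar' (n'' + d)
      (rename u (Fin.addCases (fun y => Fin.natAdd n'' y) (fun v => Fin.castAdd d (ρ v))))
      (rename u' (Fin.addCases (fun y => Fin.natAdd n'' y) (fun v => Fin.castAdd d (ρ v)))) := by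
  have main : SODeriv S E 1 (fun _ => p) n''
      (.mvar 0 (fun v => .var (ρ v))) (.mvar 0 (fun v => .var (ρ v))) :=
    SODeriv.refl _
  have h := main.msub (σ := fun _ => u) (τ := fun _ => u') (fun _ => D)
  have comp : ∀ (w : Term S (Fin k') mar' (d + p)),
      msubst (Term.mvar (S := S) (M := Fin 1) (mar := fun _ => p) 0 (fun v => .var (ρ v)))
          (Fin.castAdd d) (fun _ => rename w (sideWeak n'' d p))
        = rename w (Fin.addCases (fun y => Fin.natAdd n'' y) (fun v => Fin.castAdd d (ρ v))) := by
    intro w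
    show subst (rename w (sideWeak n'' d p)) _ = _
    rw [subst_rename]
    refine Eq.trans (subst_congr _ fun x => ?_) (subst_of_var w _)
    induction x using finAddCases with
    | h1 x =>
      have h1 : sideWeak n'' d p (Fin.castAdd p x) = Fin.castAdd p (Fin.natAdd n'' x) := by
        simp [sideWeak]
      rw [h1, Fin.addCases_left, Fin.addCases_left]
    | h2 x =>
      have h2 : sideWeak n'' d p (Fin.natAdd d x) = Fin.natAdd (n'' + d) x := by
        simp [sideWeak]
      rw [h2, Fin.addCases_right, Fin.addCases_right]
      rfl
  rw [comp u, comp u'] at h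
  exact h

/-- Rename congruence (admissible). -/
theorem SODeriv.rename_congr {k' : ℕ} {mar' : Fin k' → ℕ} {n n' : ℕ}
    {u u' : Term S (Fin k') mar' n} (D : SODeriv S E k' mar' n u u')
    (ρ : Fin n → Fin n') :
    SODeriv S E k' mar' n' (rename u ρ) (rename u' ρ) := by
  have h0 : n = 0 + n := (Nat.zero_add n).symm
  have h := (D.castCtx_congr h0).trickB (d := 0) ρ
  rw [rename_castCtx, rename_castCtx] at h
  have key : (fun x => Fin.addCases (m := 0) (fun y => Fin.natAdd n' y)
      (fun v => Fin.castAdd 0 (ρ v)) (Fin.cast h0 x)) = ρ := by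
    funext x
    have hx : Fin.cast h0 x = Fin.natAdd 0 x := by ext; simp
    rw [hx, Fin.addCases_right]
    ext; simp
  rw [key] at h
  exact h

/-- Full metasubstitution congruence (admissible). -/
theorem SODeriv.msubst_congr_all {k : ℕ} {mar : Fin k → ℕ} {n : ℕ}
    {s t : Term S (Fin k) mar n} (D : SODeriv S E k mar n s t)
    {k' : ℕ} {mar' : Fin k' → ℕ} {n₁ : ℕ} (ρ : Fin n → Fin n₁)
    {σ τ : ∀ i : Fin k, Term S (Fin k') mar' (n₁ + mar i)}
    (hστ : ∀ i, SODeriv S E k' mar' (n₁ + mar i) (σ i) (τ i)) :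
    SODeriv S E k' mar' n₁ (msubst s ρ σ) (msubst t ρ τ) := by
  have h := D.msub (d := n₁) hστ
  have h2 := h.rename_congr (Fin.addCases ρ (fun y => y))
  rw [rename_msubst, rename_msubst] at h2
  have comp : ∀ (w : Term S (Fin k) mar n) (χ : ∀ i : Fin k, Term S (Fin k') mar' (n₁ + mar i)),
      msubst w (fun x => Fin.addCases ρ (fun y => y) (Fin.castAdd n₁ x))
        (fun m => rename (rename (χ m) (sideWeak n n₁ (mar m)))
          (extRen (Fin.addCases ρ (fun y => y)) (mar m)))
      = msubst w ρ χ := by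
    intro w χ
    rw [msubst_ρcongr w _ (fun x => Fin.addCases_left x)]
    refine msubst_congr _ _ fun m => ?_
    rw [rename_rename]
    have : (fun x => extRen (Fin.addCases ρ fun y => y) (mar m) (sideWeak n n₁ (mar m) x))
        = fun x : Fin (n₁ + mar m) => x := by
      funext x
      induction x using finAddCases with
      | h1 y =>
        have : sideWeak n n₁ (mar m) (Fin.castAdd (mar m) y)
            = Fin.castAdd (mar m) (Fin.natAdd n y) := by simp [sideWeak]
        rw [this, extRen_castAdd, Fin.addCases_right]
      | h2 v =>
        have : sideWeak n n₁ (mar m) (Fin.natAdd n₁ v) = Fin.natAdd (n + n₁) v := by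
          simp [sideWeak]
        rw [this, extRen_natAdd]
    rw [this, rename_id]
  rw [comp s σ, comp t τ] at h2
  exact h2

end SO
namespace SO
open Term

variable {S : SOSig} {E : Set (SOEqn S)}

/-- The extended metavariable-arity function used to derive substitution congruence. -/
def subAr (m : ℕ) : Fin (m + 1) → ℕ :=
  fun i => match i with
  | ⟨0, _⟩ => m
  | ⟨_ + 1, _⟩ => 0

/-- Substitution congruence (admissible). -/
theorem SODeriv.subst_congr_all {k' : ℕ} {mar' : Fin k' → ℕ} {m n₂ : ℕ}
    {a b : Term S (Fin k') mar' m} (D : SODeriv S E k' mar' m a b)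
    {f g : Fin m → Term S (Fin k') mar' n₂}
    (hfg : ∀ x, SODeriv S E k' mar' n₂ (f x) (g x)) :
    SODeriv S E k' mar' n₂ (subst a f) (subst b g) := by
  have hm0 : (0 : ℕ) < m + 1 := Nat.succ_pos m
  set u₁ : Term S (Fin (m + 1)) (subAr m) 0 :=
    .mvar ⟨0, hm0⟩ (fun v : Fin m => .mvar ⟨v.val + 1, Nat.succ_lt_succ v.isLt⟩
      (fun w : Fin 0 => w.elim0)) with hu₁
  let σf : ∀ (h : Fin m → Term S (Fin k') mar' n₂) (c : Term S (Fin k') mar' m)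
      (i : Fin (m + 1)), Term S (Fin k') mar' (n₂ + subAr m i) :=
    fun h c i => match i with
    | ⟨0, _⟩ => rename c (Fin.natAdd n₂)
    | ⟨v + 1, hv⟩ => h ⟨v, Nat.lt_of_succ_lt_succ hv⟩
  have hσ : ∀ i, SODeriv S E k' mar' (n₂ + subAr m i) (σf f a i) (σf g b i) := by
    intro i
    match i with
    | ⟨0, _⟩ => exact D.rename_congr _
    | ⟨v + 1, hv⟩ => exact hfg _
  have h := (SODeriv.refl (E := E) u₁).msubst_congr_all (Fin.elim0 (α := Fin n₂)) hσ
  have comp : ∀ (c : Term S (Fin k') mar' m) (h : Fin m → Term S (Fin k') mar' n₂),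
      msubst u₁ Fin.elim0 (σf h c) = subst c h := by
    intro c h
    show subst (rename c (Fin.natAdd n₂)) _ = _
    refine (subst_rename _ _ _).trans ?_
    refine subst_congr _ fun v => ?_
    refine (Fin.addCases_right v).trans ?_
    show subst (h _) _ = h v
    refine Eq.trans (subst_congr _ fun x => ?_) (Eq.trans (subst_var _) ?_)
    · exact Fin.addCases_left (n := 0) x
    · exact congrArg h (Fin.ext rfl)
  rw [comp a f, comp b g] at h
  exact h

/-- Operator congruence (admissible). -/
theorem SODeriv.op_congr {k' : ℕ} {mar' : Fin k' → ℕ} {n₂ : ℕ} (o : S.Op)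
    {cs ds : ∀ i : Fin (S.arity o).len, Term S (Fin k') mar' (n₂ + (S.arity o).ar i)}
    (h : ∀ i, SODeriv S E k' mar' (n₂ + (S.arity o).ar i) (cs i) (ds i)) :
    SODeriv S E k' mar' n₂ (.op o cs) (.op o ds) := by
  set u₁ : Term S (Fin (S.arity o).len) (S.arity o).ar 0 :=
    .op o (fun i => .mvar i (fun v => .var (Fin.natAdd 0 v))) with hu₁
  have hD := (SODeriv.refl (E := E) u₁).msubst_congr_all (Fin.elim0 (α := Fin n₂)) h
  have comp : ∀ (cs : ∀ i : Fin (S.arity o).len, Term S (Fin k') mar' (n₂ + (S.arity o).ar i)),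
      msubst u₁ Fin.elim0 cs = .op o cs := by
    intro cs
    show Term.op o _ = _
    refine congrArg _ (funext fun i => ?_)
    show subst (rename (cs i) (midWeak n₂ _ _)) _ = cs i
    rw [subst_rename]
    refine Eq.trans (subst_congr _ fun x => ?_) (subst_var _)
    induction x using finAddCases with
    | h1 y =>
      have : midWeak n₂ ((S.arity o).ar i) ((S.arity o).ar i) (Fin.castAdd _ y)
          = Fin.castAdd _ (Fin.castAdd _ y) := by
        rw [midWeak_eq, extRen_castAdd]
      rw [this, Fin.addCases_left]
    | h2 v =>
      have : midWeak n₂ ((S.arity o).ar i) ((S.arity o).ar i) (Fin.natAdd _ v)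
          = Fin.natAdd (n₂ + (S.arity o).ar i) v := by
        rw [midWeak_eq, extRen_natAdd]
      rw [this, Fin.addCases_right]
      show Term.var (extRen Fin.elim0 _ (Fin.natAdd 0 v)) = _
      rw [extRen_natAdd]
  rw [comp cs, comp ds] at hD
  exact hD

end SO
namespace SO
open Term

variable {S : SOSig} (A : SOModel S)

theorem midWeak_castAdd {n' p a : ℕ} (x : Fin n') :
    midWeak n' p a (Fin.castAdd a x) = Fin.castAdd a (Fin.castAdd p x) := by
  rw [midWeak_eq, extRen_castAdd]

theorem midWeak_natAdd {n' p a : ℕ} (x : Fin a) :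
    midWeak n' p a (Fin.natAdd n' x) = Fin.natAdd (n' + p) x := by
  rw [midWeak_eq, extRen_natAdd]

theorem extMult_castAdd (B : SubstMonoid) {n n' : ℕ} (g : Fin n → B.F n') (p : ℕ)
    (x : Fin n) : B.extMult g p (Fin.castAdd p x) = B.map (Fin.castAdd p) (g x) := by
  simp [SubstMonoid.extMult]

theorem extMult_natAdd (B : SubstMonoid) {n n' : ℕ} (g : Fin n → B.F n') (p : ℕ)
    (x : Fin p) : B.extMult g p (Fin.natAdd n x) = B.ν (Fin.natAdd n' x) := by
  simp [SubstMonoid.extMult]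

theorem map_fcongr {m n : ℕ} {f f' : Fin m → Fin n} (x : A.F m) (h : ∀ y, f y = f' y) :
    A.map f x = A.map f' x := by rw [funext h]

theorem mult_fcongr {k n : ℕ} (a : A.F k) {g g' : Fin k → A.F n} (h : ∀ y, g y = g' y) :
    A.mult a g = A.mult a g' := by rw [funext h]

theorem map_map {m n p : ℕ} (f : Fin m → Fin n) (g : Fin n → Fin p) (x : A.F m) :
    A.map g (A.map f x) = A.map (fun y => g (f y)) x := (A.map_comp f g x).symm

/-- Interpretation with an arbitrary valuation of the object variables. -/
def interpV {k : ℕ} {mar : Fin k → ℕ} :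
    ∀ {n j : ℕ}, Term S (Fin k) mar n →
      (∀ i : Fin k, A.F (j + mar i)) → (Fin n → A.F j) → A.F j
  | _, _, .var x, _, g => g x
  | _, _, .mvar m ts, θ, g =>
      A.mult (θ m)
        (Fin.addCases (fun v => A.ν v) (fun v => interpV (ts v) θ g))
  | _, _, .op o ts, θ, g =>
      A.opMap o (fun i =>
        interpV (ts i) (fun m => A.map (Term.midWeak _ _ (mar m)) (θ m))
          (A.toSubstMonoid.extMult g _))

theorem interpV_congr {k : ℕ} {mar : Fin k → ℕ} {n j : ℕ} (t : Term S (Fin k) mar n)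
    {θ θ' : ∀ i : Fin k, A.F (j + mar i)} {g g' : Fin n → A.F j}
    (hθ : ∀ m, θ m = θ' m) (hg : ∀ x, g x = g' x) :
    interpV A t θ g = interpV A t θ' g' := by
  rw [funext hθ, funext hg]

theorem interp_congr {k : ℕ} {mar : Fin k → ℕ} {n j : ℕ} (t : Term S (Fin k) mar n)
    {θ θ' : ∀ i : Fin k, A.F (j + mar i)} {γ γ' : Fin n → Fin j}
    (hθ : ∀ m, θ m = θ' m) (hγ : ∀ x, γ x = γ' x) :
    interp A t θ γ = interp A t θ' γ' := by
  rw [funext hθ, funext hγ]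

theorem interp_eq_interpV {k : ℕ} {mar : Fin k → ℕ} {n : ℕ} (t : Term S (Fin k) mar n) :
    ∀ {j : ℕ} (θ : ∀ i : Fin k, A.F (j + mar i)) (γ : Fin n → Fin j),
      interp A t θ γ = interpV A t θ (fun x => A.ν (γ x)) := by
  induction t with
  | var x => intros; rfl
  | mvar m ts ih =>
    intro j θ γ
    show A.mult _ _ = A.mult _ _
    refine mult_fcongr A _ fun y => ?_
    induction y using finAddCases with
    | h1 x => rw [Fin.addCases_left, Fin.addCases_left]
    | h2 x => rw [Fin.addCases_right, Fin.addCases_right]; exact ih x θ γ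
  | op o ts ih =>
    intro j θ γ
    show A.opMap o _ = A.opMap o _
    refine congrArg _ (funext fun i => ?_)
    rw [ih i]
    refine interpV_congr A _ (fun m => rfl) fun x => ?_
    induction x using finAddCases with
    | h1 x => simp [extRen_castAdd, extMult_castAdd, A.ν_nat]
    | h2 x => simp [extRen_natAdd, extMult_natAdd]

theorem interpV_rename {k : ℕ} {mar : Fin k → ℕ} {n : ℕ} (t : Term S (Fin k) mar n) :
    ∀ {n' j : ℕ} (r : Fin n → Fin n') (θ : ∀ i : Fin k, A.F (j + mar i))
      (g : Fin n' → A.F j),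
      interpV A (rename t r) θ g = interpV A t θ (fun x => g (r x)) := by
  induction t with
  | var x => intros; rfl
  | mvar m ts ih =>
    intro n' j r θ g
    show A.mult _ _ = A.mult _ _
    refine mult_fcongr A _ fun y => ?_
    induction y using finAddCases with
    | h1 x => rw [Fin.addCases_left, Fin.addCases_left]
    | h2 x => rw [Fin.addCases_right, Fin.addCases_right]; exact ih x r θ g
  | op o ts ih =>
    intro n' j r θ g
    show A.opMap o _ = A.opMap o _
    refine congrArg _ (funext fun i => ?_)
    rw [ih i]
    refine interpV_congr A _ (fun m => rfl) fun x => ?_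
    induction x using finAddCases with
    | h1 x => simp [extRen_castAdd, extMult_castAdd]
    | h2 x => simp [extRen_natAdd, extMult_natAdd]

theorem interpV_nat {k : ℕ} {mar : Fin k → ℕ} {n : ℕ} (t : Term S (Fin k) mar n) :
    ∀ {j j' : ℕ} (ρ : Fin j → Fin j') (θ : ∀ i : Fin k, A.F (j + mar i))
      (g : Fin n → A.F j),
      A.map ρ (interpV A t θ g)
        = interpV A t (fun m => A.map (extRen ρ (mar m)) (θ m)) (fun x => A.map ρ (g x)) := by
  induction t with
  | var x => intros; rfl
  | mvar m ts ih =>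
    intro j j' ρ θ g
    show A.map ρ (A.mult _ _) = A.mult _ _
    rw [A.mult_nat, A.mult_dinat]
    refine mult_fcongr A _ fun y => ?_
    induction y using finAddCases with
    | h1 x => rw [Fin.addCases_left, extRen_castAdd, Fin.addCases_left, A.ν_nat]
    | h2 x => rw [Fin.addCases_right, extRen_natAdd, Fin.addCases_right]; exact ih x ρ θ g
  | op o ts ih =>
    intro j j' ρ θ g
    show A.map ρ (A.opMap o _) = A.opMap o _
    rw [A.opMap_nat]
    refine congrArg _ (funext fun i => ?_)
    rw [ih i]
    refine interpV_congr A _ (fun m => ?_) fun x => ?_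
    · rw [map_map, map_map]
      refine map_fcongr A _ fun y => ?_
      induction y using finAddCases with
      | h1 z => simp [midWeak_castAdd, midWeak_natAdd, extRen_castAdd, extRen_natAdd]
      | h2 z => simp [midWeak_castAdd, midWeak_natAdd, extRen_castAdd, extRen_natAdd]
    · induction x using finAddCases with
      | h1 z =>
        rw [extMult_castAdd, extMult_castAdd, map_map, map_map]
        refine map_fcongr A _ fun y => ?_
        rw [extRen_castAdd]
      | h2 z => rw [extMult_natAdd, extMult_natAdd, A.ν_nat, extRen_natAdd]

theorem interpV_subst {k : ℕ} {mar : Fin k → ℕ} {n : ℕ} (t : Term S (Fin k) mar n) :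
    ∀ {n' j : ℕ} (σ : Fin n → Term S (Fin k) mar n')
      (θ : ∀ i : Fin k, A.F (j + mar i)) (g : Fin n' → A.F j),
      interpV A (subst t σ) θ g = interpV A t θ (fun x => interpV A (σ x) θ g) := by
  induction t with
  | var x => intros; rfl
  | mvar m ts ih =>
    intro n' j σ θ g
    show A.mult _ _ = A.mult _ _
    refine mult_fcongr A _ fun y => ?_
    induction y using finAddCases with
    | h1 x => rw [Fin.addCases_left, Fin.addCases_left]
    | h2 x => rw [Fin.addCases_right, Fin.addCases_right]; exact ih x σ θ g
  | op o ts ih =>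
    intro n' j σ θ g
    show A.opMap o _ = A.opMap o _
    refine congrArg _ (funext fun i => ?_)
    rw [ih i]
    refine interpV_congr A _ (fun m => rfl) fun x => ?_
    induction x using finAddCases with
    | h1 x =>
      rw [extSub_castAdd, extMult_castAdd]
      show interpV A (rename (σ x) _) _ _ = _
      rw [interpV_rename, interpV_nat]
      refine (interpV_congr A _ (fun m => ?_) fun y => ?_).symm
      · refine map_fcongr A _ fun y => ?_
        rw [midWeak_eq]
      · rw [extMult_castAdd]
    | h2 x =>
      rw [extSub_natAdd, extMult_natAdd]
      show A.toSubstMonoid.extMult g _ (Fin.natAdd _ x) = _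
      rw [extMult_natAdd]

/-- Semantic substitution lemma. -/
theorem interpV_mult {k' : ℕ} {mar' : Fin k' → ℕ} {c : ℕ} (u : Term S (Fin k') mar' c) :
    ∀ {J j : ℕ} (θ' : ∀ m', A.F (J + mar' m')) (θ : ∀ m', A.F (j + mar' m'))
      (g : Fin c → A.F J) (h : Fin J → A.F j)
      (H : ∀ m', A.mult (θ' m') (A.toSubstMonoid.extMult h (mar' m')) = θ m'),
      A.mult (interpV A u θ' g) h = interpV A u θ (fun x => A.mult (g x) h) := by
  induction u with
  | var x => intros; rfl
  | mvar m ts ih =>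
    intro J j θ' θ g h H
    show A.mult (A.mult _ _) _ = A.mult (θ m) _
    rw [← H m, A.mult_assoc, A.mult_assoc]
    refine mult_fcongr A _ fun y => ?_
    induction y using finAddCases with
    | h1 x =>
      rw [Fin.addCases_left, A.mult_unit_left, extMult_castAdd, A.mult_dinat]
      refine Eq.trans (A.mult_unit_right (h x)).symm ?_
      refine mult_fcongr A _ fun z => ?_
      rw [Fin.addCases_left]
    | h2 x =>
      rw [Fin.addCases_right, extMult_natAdd, A.mult_unit_left, Fin.addCases_right]
      exact ih x θ' θ g h H
  | op o ts ih =>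
    intro J j θ' θ g h H
    show A.mult (A.opMap o _) _ = A.opMap o _
    rw [A.opMap_mult]
    refine congrArg _ (funext fun i => ?_)
    rw [ih i _ (fun m' => A.map (midWeak j _ (mar' m')) (θ m')) _
      (A.toSubstMonoid.extMult h _) ?_]
    · refine interpV_congr A _ (fun m' => rfl) fun x => ?_
      induction x using finAddCases with
      | h1 z =>
        rw [extMult_castAdd, extMult_castAdd, A.mult_dinat,
          mult_fcongr A (g z) (fun y => extMult_castAdd A.toSubstMonoid h _ y), ← A.mult_nat]
      | h2 z =>
        rw [extMult_natAdd, extMult_natAdd, A.mult_unit_left, extMult_natAdd]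
    · intro m'
      show A.mult (A.map (midWeak J _ (mar' m')) (θ' m')) _
          = A.map (midWeak j _ (mar' m')) (θ m')
      rw [A.mult_dinat, ← H m', A.mult_nat]
      refine mult_fcongr A _ fun y => ?_
      induction y using finAddCases with
      | h1 z =>
        rw [midWeak_castAdd, extMult_castAdd, extMult_castAdd, extMult_castAdd,
          map_map, map_map]
        refine map_fcongr A _ fun w => ?_
        rw [midWeak_castAdd]
      | h2 z =>
        rw [midWeak_natAdd, extMult_natAdd, extMult_natAdd, A.ν_nat, midWeak_natAdd]

/-- Semantic metasubstitution lemma. -/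
theorem interpV_msubst {k : ℕ} {mar : Fin k → ℕ} {k' : ℕ} {mar' : Fin k' → ℕ} {n : ℕ}
    (t : Term S (Fin k) mar n) :
    ∀ {n' j : ℕ} (ρ : Fin n → Fin n') (sf : ∀ m : Fin k, Term S (Fin k') mar' (n' + mar m))
      (θ : ∀ m', A.F (j + mar' m')) (g : Fin n' → A.F j),
      interpV A (msubst t ρ sf) θ g
        = interpV A t
            (fun m => interpV A (sf m)
              (fun m' => A.map (midWeak j (mar m) (mar' m')) (θ m'))
              (A.toSubstMonoid.extMult g (mar m)))
            (fun x => g (ρ x)) := by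
  induction t with
  | var x => intros; rfl
  | mvar m ts ih =>
    intro n' j ρ sf θ g
    show interpV A (subst (sf m) _) θ g = A.mult _ _
    rw [interpV_subst, interpV_mult A (sf m)
      (fun m' => A.map (midWeak j (mar m) (mar' m')) (θ m')) θ
      (A.toSubstMonoid.extMult g (mar m)) _ ?_]
    · refine interpV_congr A _ (fun m' => rfl) fun y => ?_
      induction y using finAddCases with
      | h1 x =>
        rw [Fin.addCases_left, extMult_castAdd, A.mult_dinat]
        show interpV A (Term.var x) θ g = _
        show g x = _
        refine Eq.trans (A.mult_unit_right (g x)).symm ?_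
        refine mult_fcongr A _ fun z => ?_
        rw [Fin.addCases_left]
      | h2 x =>
        rw [Fin.addCases_right, extMult_natAdd, A.mult_unit_left, Fin.addCases_right]
        exact ih x ρ sf θ g
    · intro m'
      show A.mult (A.map (midWeak j (mar m) (mar' m')) (θ m')) _ = θ m'
      rw [A.mult_dinat]
      refine Eq.trans (mult_fcongr A _ fun y => ?_) (A.mult_unit_right _)
      induction y using finAddCases with
      | h1 x => rw [midWeak_castAdd, extMult_castAdd, Fin.addCases_left, A.ν_nat]
      | h2 x => rw [midWeak_natAdd, extMult_natAdd]
  | op o ts ih =>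
    intro n' j ρ sf θ g
    show A.opMap o _ = A.opMap o _
    refine congrArg _ (funext fun i => ?_)
    rw [ih i]
    refine interpV_congr A _ (fun m => ?_) fun x => ?_
    · show interpV A (rename (sf m) _) _ _
          = A.map (midWeak j _ (mar m)) (interpV A (sf m) _ _)
      rw [interpV_rename, interpV_nat]
      refine interpV_congr A _ (fun m' => ?_) fun y => ?_
      · rw [map_map, map_map]
        refine map_fcongr A _ fun w => ?_
        induction w using finAddCases with
        | h1 z => simp [midWeak_castAdd, midWeak_natAdd, extRen_castAdd, extRen_natAdd]
        | h2 z => simp [midWeak_castAdd, midWeak_natAdd, extRen_castAdd, extRen_natAdd]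
      · induction y using finAddCases with
        | h1 z =>
          rw [midWeak_castAdd, extMult_castAdd, extMult_castAdd, extMult_castAdd,
            map_map, map_map]
          refine map_fcongr A _ fun w => ?_
          rw [midWeak_castAdd]
        | h2 z =>
          rw [midWeak_natAdd, extMult_natAdd, extMult_natAdd, A.ν_nat, midWeak_natAdd]
    · induction x using finAddCases with
      | h1 z => rw [extRen_castAdd, extMult_castAdd, extMult_castAdd]
      | h2 z => rw [extRen_natAdd, extMult_natAdd, extMult_natAdd]

end SO
namespace SO
open Term

variable {S : SOSig} {E : Set (SOEqn S)} (A : SOModel S)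

theorem interp_side {k' : ℕ} {mar' : Fin k' → ℕ} {n d p j : ℕ}
    (u : Term S (Fin k') mar' (d + p)) (θ : ∀ m', A.F (j + mar' m'))
    (γ : Fin (n + d) → Fin j) :
    interpV A (rename u (sideWeak n d p))
        (fun m' => A.map (midWeak j p (mar' m')) (θ m'))
        (A.toSubstMonoid.extMult (fun x => A.ν (γ x)) p)
      = interp A u (fun m' => A.map (midWeak j p (mar' m')) (θ m'))
          (Fin.addCases (fun y => Fin.castAdd p (γ (Fin.natAdd n y)))
            (fun v => Fin.natAdd j v)) := by
  rw [interpV_rename, interp_eq_interpV]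
  refine interpV_congr A _ (fun m' => rfl) fun x => ?_
  induction x using finAddCases with
  | h1 y =>
    have h1 : sideWeak n d p (Fin.castAdd p y) = Fin.castAdd p (Fin.natAdd n y) := by
      simp [sideWeak]
    rw [h1, extMult_castAdd, A.ν_nat, Fin.addCases_left]
  | h2 v =>
    have h2 : sideWeak n d p (Fin.natAdd d v) = Fin.natAdd (n + d) v := by
      simp [sideWeak]
    rw [h2, extMult_natAdd, Fin.addCases_right]

/-- Soundness of Second-Order Equational Logic. -/
theorem SODeriv.sound {k : ℕ} {mar : Fin k → ℕ} {n : ℕ} {s t : Term S (Fin k) mar n}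
    (D : SODeriv S E k mar n s t) (A : SOModel S) (hA : ∀ e ∈ E, A.Sat e) :
    ∀ (j : ℕ) (θ : ∀ i : Fin k, A.F (j + mar i)) (γ : Fin n → Fin j),
      interp A s θ γ = interp A t θ γ := by
  induction D with
  | ax he => exact hA _ he
  | refl u => intros; rfl
  | symm _ ih => intro j θ γ; exact (ih j θ γ).symm
  | trans _ _ ih1 ih2 => intro j θ γ; exact (ih1 j θ γ).trans (ih2 j θ γ)
  | msub Ds hστ ihD ihσ =>
    rename_i kk kmar nn ss tt kk' kmar' dd σ τ
    intro j θ γ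
    rw [interp_eq_interpV, interp_eq_interpV, interpV_msubst, interpV_msubst]
    have hΘ : ∀ i, interpV A (rename (σ i) (sideWeak nn dd (kmar i)))
        (fun m' => A.map (midWeak j (kmar i) (kmar' m')) (θ m'))
        (A.toSubstMonoid.extMult (fun x => A.ν (γ x)) (kmar i))
      = interpV A (rename (τ i) (sideWeak nn dd (kmar i)))
        (fun m' => A.map (midWeak j (kmar i) (kmar' m')) (θ m'))
        (A.toSubstMonoid.extMult (fun x => A.ν (γ x)) (kmar i)) := by
      intro i
      rw [interp_side A (σ i) θ γ, interp_side A (τ i) θ γ]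
      exact ihσ i (j + kmar i) (fun m' => A.map (midWeak j (kmar i) (kmar' m')) (θ m'))
        (Fin.addCases (fun y => Fin.castAdd (kmar i) (γ (Fin.natAdd nn y)))
          (fun v => Fin.natAdd j v))
    refine Eq.trans (interpV_congr A ss hΘ fun x => rfl) ?_
    exact (interp_eq_interpV A ss _ _).symm.trans
      ((ihD j _ _).trans (interp_eq_interpV A tt _ _))

end SO
namespace SO
open Term

variable {S : SOSig} (E : Set (SOEqn S)) {k : ℕ} {mar : Fin k → ℕ}

def termSetoid (n : ℕ) : Setoid (Term S (Fin k) mar n) where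
  r a b := SODeriv S E k mar n a b
  iseqv := ⟨SODeriv.refl, SODeriv.symm, SODeriv.trans⟩

abbrev TQ (k' : ℕ) (mar' : Fin k' → ℕ) (n : ℕ) : Type :=
  Quotient (termSetoid (S := S) E (k := k') (mar := mar') n)

def mkq {n : ℕ} (a : Term S (Fin k) mar n) : TQ E k mar n := Quotient.mk _ a

theorem out_mk {n : ℕ} (a : Term S (Fin k) mar n) :
    SODeriv S E k mar n (mkq E a).out a :=
  Quotient.exact (Quotient.out_eq (mkq E a))

theorem mk_out {n : ℕ} (x : TQ E k mar n) : mkq E x.out = x := Quotient.out_eq _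

theorem soundq {n : ℕ} {a b : Term S (Fin k) mar n} (h : SODeriv S E k mar n a b) :
    mkq E a = mkq E b := Quotient.sound h

/-- The term (free/initial) model on the metavariable context `(k, mar)`. -/
noncomputable def termModel : SOModel S where
  F n := TQ E k mar n
  map ρ a := mkq E (rename a.out ρ)
  map_id x := by
    refine Eq.trans (soundq E ?_) (mk_out E x)
    show SODeriv S E _ _ _ (rename x.out fun y => y) x.out
    rw [rename_id]
    exact SODeriv.refl _
  map_comp f g x := by
    refine (soundq E ?_).symm
    refine ((out_mk E _).rename_congr g).trans ?_
    rw [rename_rename]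
    exact SODeriv.refl _
  ν i := mkq E (.var i)
  ν_nat ρ i := soundq E ((out_mk E _).rename_congr ρ)
  mult a g := mkq E (subst a.out (fun i => (g i).out))
  mult_dinat ρ a g := by
    refine soundq E ?_
    refine ((out_mk E _).subst_congr_all (fun x => SODeriv.refl _)).trans ?_
    rw [subst_rename]
    exact SODeriv.refl _
  mult_nat ρ a g := by
    refine soundq E ?_
    refine ((out_mk E _).rename_congr ρ).trans ?_
    rw [rename_subst]
    exact (SODeriv.refl _).subst_congr_all fun i => (out_mk E _).symm
  mult_unit_left i g := by
    refine Eq.trans (soundq E ?_) (mk_out E (g i))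
    exact (out_mk E _).subst_congr_all fun x => SODeriv.refl _
  mult_unit_right a := by
    refine Eq.trans (soundq E ?_) (mk_out E a)
    refine ((SODeriv.refl a.out).subst_congr_all fun x => out_mk E _).trans ?_
    rw [subst_var]
    exact SODeriv.refl _
  mult_assoc a f g := by
    refine soundq E ?_
    refine ((out_mk E _).subst_congr_all fun x => SODeriv.refl _).trans ?_
    rw [subst_subst]
    exact (SODeriv.refl _).subst_congr_all fun i => (out_mk E _).symm
  opMap := fun o {n} ts => mkq E (.op o (fun i => (ts i).out))
  opMap_nat := by
    intro o n n' ρ ts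
    refine soundq E ?_
    refine ((out_mk E _).rename_congr ρ).trans ?_
    show SODeriv S E _ _ _ (Term.op o _) (Term.op o _)
    exact SODeriv.op_congr o fun i => (out_mk E _).symm
  opMap_mult := by
    intro o n n' ts g
    refine soundq E ?_
    refine ((out_mk E _).subst_congr_all fun x => SODeriv.refl _).trans ?_
    show SODeriv S E _ _ _ (Term.op o _) (Term.op o _)
    refine SODeriv.op_congr o fun i => ?_
    refine ((SODeriv.refl _).subst_congr_all fun v => ?_).trans (out_mk E _).symm
    induction v using Term.finAddCases with
    | h1 x =>
      rw [extSub_castAdd, extMult_castAdd]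
      exact (out_mk E _).symm
    | h2 x =>
      rw [extSub_natAdd, extMult_natAdd]
      exact (out_mk E _).symm

theorem interp_tm {k₁ : ℕ} {mar₁ : Fin k₁ → ℕ} {n : ℕ} (u : Term S (Fin k₁) mar₁ n) :
    ∀ {j : ℕ} (θ : ∀ i : Fin k₁, (termModel E (k := k) (mar := mar)).F (j + mar₁ i))
      (γ : Fin n → Fin j),
      interp (termModel E) u θ γ = mkq E (msubst u γ (fun i => (θ i).out)) := by
  induction u with
  | var x => intros; rfl
  | mvar m ts ih =>
    intro j θ γ
    show mkq E (subst (θ m).out _) = mkq E (subst (θ m).out _)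
    refine soundq E ((SODeriv.refl _).subst_congr_all fun y => ?_)
    induction y using Term.finAddCases with
    | h1 x =>
      simp only [Fin.addCases_left]
      exact out_mk E _
    | h2 v =>
      simp only [Fin.addCases_right]
      rw [ih v θ γ]
      exact out_mk E _
  | op o ts ih =>
    intro j θ γ
    show mkq E (Term.op o _) = mkq E (Term.op o _)
    refine soundq E (SODeriv.op_congr o fun i => ?_)
    show SODeriv S E k mar _ (Quotient.out (interp (termModel E) (ts i)
        (fun m => (termModel E).map (midWeak j ((S.arity o).ar i) (mar₁ m)) (θ m))
        (extRen γ ((S.arity o).ar i)))) _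
    rw [ih i]
    refine (out_mk E _).trans ?_
    exact (SODeriv.refl (ts i)).msubst_congr_all _ fun m => out_mk E _

theorem termModel_sat (e : SOEqn S) (he : e ∈ E) :
    (termModel E (k := k) (mar := mar)).Sat e := by
  intro j θ γ
  rw [interp_tm, interp_tm]
  exact soundq E ((SODeriv.ax he).msubst_congr_all γ fun i => SODeriv.refl _)

end SO

/-- **Second-Order Soundness and Completeness.**
For a second-order equational presentation `ℰ = (Σ, E)`, an equation
`Θ ▹ Γ ⊢ s ≡ t` is derivable from `E` in Second-Order Equational Logic if and only if
every `ℰ`-model `A` in `Set^𝔽` (i.e. every `Σ`-monoid satisfying all axioms of `E`)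
satisfies it, i.e. the interpretations `⟦Θ ▹ Γ ⊢ s⟧_A` and `⟦Θ ▹ Γ ⊢ t⟧_A` are equal
morphisms `⟦Θ ▹ Γ⟧_A → A` in `Set^𝔽`. -/
theorem second_order_soundness_and_completeness
    {S : SOSig} (E : Set (SOEqn S)) {k : ℕ} {mar : Fin k → ℕ} {n : ℕ}
    (s t : Term S (Fin k) mar n) :
    SODeriv S E k mar n s t ↔
      ∀ A : SOModel S, (∀ e ∈ E, A.Sat e) → A.Sat ⟨k, mar, n, s, t⟩ := by
  constructor
  · intro D A hA j θ γ
    exact D.sound A hA j θ γ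
  · intro h
    have hTM := h (termModel (k := k) (mar := mar) E)
      (fun e he => termModel_sat (k := k) (mar := mar) E e he)
    have h2 := hTM n (fun i => mkq E (.mvar i (fun v => .var (Fin.natAdd n v)))) (fun x => x)
    dsimp only at h2
    replace h2 := (interp_tm E s _ (fun x => x)).symm.trans (h2.trans (interp_tm E t _ _))
    have hD := Quotient.exact h2
    have fix : ∀ u : Term S (Fin k) mar n,
        SODeriv S E k mar n
          (msubst u (fun x => x)
            (fun i => (mkq E (.mvar i (fun v => .var (Fin.natAdd n v)))).out)) u := by
      intro u
      refine ((SODeriv.refl u).msubst_congr_all (fun x => x) fun i => out_mk E _).trans ?_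
      rw [msubst_generic, rename_id]
      exact SODeriv.refl u
    exact ((fix s).symm.trans hD).trans (fix t)
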